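/- Let T: Δ → Δ be the n-dimensional triangle map defined on Δ = {(x₁,…,x_n) : 1 ≥ x₁ ≥ ⋯ ≥ x_n > 0} by T(x) = (x₂/x₁, …, x_n/x₁, (1 − x₁ − b·x_n)/x₁) where b = ⌊(1 − x₁)/x_n⌋. Then the function f(x₁,…,x_n) = 1/(x₁·x₂·⋯·x_{n-1}·(1+x_n)) is a fixed point of the transfer operator: for all x in the interior of Δ, ∑_{k=0}^∞ (1/(1 + k·x_{n-1} + x_n)^{n+1}) · f(1/(1 + k·x_{n-1} + x_n), x₁/(1 + k·x_{n-1} + x_n), …, x_{n-1}/(1 + k·x_{n-1} + x_n)) = f(x₁,…,x_n). -/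

import Mathlib

/-- The invariant density `f(x) = 1/(x₁⋯x_{n-1}(1+x_n))` is a fixed point of the transfer
operator of the n-dimensional triangle map, summing over the preimages
`(1/d_k, x₁/d_k, …, x_{n-1}/d_k)` with `d_k = 1 + k·x_{n-1} + x n` and Jacobian `1/d_k^{n+1}`. -/
theorem stmt7 (n : ℕ) (hn : 2 ≤ n) (x : ℕ → ℝ)
    (hx1 : x 1 < 1) (hxn : 0 < x n)
    (hdec : ∀ i, 1 ≤ i → i < n → x (i + 1) < x i) :
    ∑' k : ℕ,
      (1 / (1 + (k : ℝ) * x (n - 1) + x n) ^ (n + 1)) *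
        (1 / ((∏ i ∈ Finset.Icc 1 (n - 1),
            (if i = 1 then 1 / (1 + (k : ℝ) * x (n - 1) + x n)
             else x (i - 1) / (1 + (k : ℝ) * x (n - 1) + x n))) *
          (1 + x (n - 1) / (1 + (k : ℝ) * x (n - 1) + x n))))
      = 1 / ((∏ i ∈ Finset.Icc 1 (n - 1), x i) * (1 + x n)) := by
  -- positivity of coordinates
  have key : ∀ m, m ≤ n - 1 → 0 < x (n - m) := by
    intro m
    induction m with
    | zero => intro _; simpa using hxn
    | succ m ih =>
      intro hm
      have h1 : 1 ≤ n - (m + 1) := by omega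
      have h2 : n - (m + 1) < n := by omega
      have h3 : n - (m + 1) + 1 = n - m := by omega
      have := hdec (n - (m + 1)) h1 h2
      rw [h3] at this
      exact lt_trans (ih (by omega)) this
  have hxpos : ∀ i, 1 ≤ i → i ≤ n → 0 < x i := by
    intro i h1 h2
    have h3 : n - (n - i) = i := by omega
    have := key (n - i) (by omega)
    rwa [h3] at this
  set y := x (n - 1) with hy
  set z := x n with hz
  have hy0 : 0 < y := hxpos (n - 1) (by omega) (by omega)
  have hz0 : 0 < z := hxn
  set P : ℝ := ∏ i ∈ Finset.Icc 1 (n - 2), x i with hP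
  have hP0 : 0 < P := by
    refine Finset.prod_pos ?_
    intro i hi
    rw [Finset.mem_Icc] at hi
    exact hxpos i hi.1 (by omega)
  have hd : ∀ k : ℕ, (0:ℝ) < 1 + (k : ℝ) * y + z := by
    intro k
    have : (0:ℝ) ≤ (k : ℝ) * y := by positivity
    linarith
  set u : ℕ → ℝ := fun k => 1 / (1 + (k : ℝ) * y + z) with hu
  -- the product in the summand
  have hprod : ∀ k : ℕ,
      (∏ i ∈ Finset.Icc 1 (n - 1),
        (if i = 1 then 1 / (1 + (k : ℝ) * y + z) else x (i - 1) / (1 + (k : ℝ) * y + z)))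
      = P / (1 + (k : ℝ) * y + z) ^ (n - 1) := by
    intro k
    set d : ℝ := 1 + (k : ℝ) * y + z with hdk
    have step1 : ∀ i ∈ Finset.Icc 1 (n - 1),
        (if i = 1 then 1 / d else x (i - 1) / d) = (if i = 1 then 1 else x (i - 1)) / d := by
      intro i _
      split <;> rfl
    rw [Finset.prod_congr rfl step1, Finset.prod_div_distrib, Finset.prod_const,
      Nat.card_Icc]
    have hcard : n - 1 + 1 - 1 = n - 1 := by omega
    rw [hcard]
    congr 1
    have hins : Finset.Icc 1 (n - 1) = insert 1 (Finset.Icc 2 (n - 1)) := by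
      ext a
      simp only [Finset.mem_Icc, Finset.mem_insert]
      omega
    rw [hins, Finset.prod_insert (by simp [Finset.mem_Icc]), if_pos rfl, one_mul]
    have step2 : ∀ i ∈ Finset.Icc 2 (n - 1),
        (if i = 1 then (1:ℝ) else x (i - 1)) = x (i - 1) := by
      intro i hi
      rw [Finset.mem_Icc] at hi
      exact if_neg (by omega)
    rw [Finset.prod_congr rfl step2]
    have hmap : Finset.Icc 2 (n - 1) = (Finset.Icc 1 (n - 2)).map (addLeftEmbedding 1) := by
      rw [Finset.map_add_left_Icc]
      congr 1
      omega
    rw [hmap, Finset.prod_map]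
    refine Finset.prod_congr rfl ?_
    intro i _
    simp [addLeftEmbedding]
  -- termwise telescoping identity
  have hterm : ∀ k : ℕ,
      (1 / (1 + (k : ℝ) * y + z) ^ (n + 1)) *
        (1 / ((∏ i ∈ Finset.Icc 1 (n - 1),
            (if i = 1 then 1 / (1 + (k : ℝ) * y + z) else x (i - 1) / (1 + (k : ℝ) * y + z))) *
          (1 + y / (1 + (k : ℝ) * y + z))))
      = (1 / (P * y)) * (u k - u (k + 1)) := by
    intro k
    rw [hprod k]
    set d : ℝ := 1 + (k : ℝ) * y + z with hdk
    have hd0 : 0 < d := hd k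
    have hd0' : 0 < d + y := by linarith
    have hpow : d ^ (n + 1) = d ^ (n - 1) * d ^ 2 := by
      rw [← pow_add]
      congr 1
      omega
    have hu2 : u (k + 1) = 1 / (d + y) := by
      have : (1 : ℝ) + ((k : ℕ) + 1 : ℕ) * y + z = d + y := by
        push_cast
        ring
      rw [hu]
      simp only [this]
    rw [hu2, hpow]
    have hD : (0:ℝ) < d ^ (n - 1) := by positivity
    show (1 / (d ^ (n - 1) * d ^ 2)) * (1 / (P / d ^ (n - 1) * (1 + y / d)))
        = (1 / (P * y)) * (1 / d - 1 / (d + y))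
    field_simp
    ring
  rw [tsum_congr hterm]
  -- telescoping sum
  have hmono : ∀ k : ℕ, 0 ≤ u k - u (k + 1) := by
    intro k
    have h1 : (1:ℝ) + (k : ℝ) * y + z ≤ 1 + ((k : ℕ) + 1 : ℕ) * y + z := by
      push_cast
      nlinarith
    have := one_div_le_one_div_of_le (hd k) h1
    simpa [hu] using sub_nonneg.mpr this
  have htend : Filter.Tendsto u Filter.atTop (nhds 0) := by
    have h1 : Filter.Tendsto (fun k : ℕ => 1 + (k : ℝ) * y + z) Filter.atTop Filter.atTop := by
      have h2 : Filter.Tendsto (fun k : ℕ => (k : ℝ) * y) Filter.atTop Filter.atTop :=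
        Filter.Tendsto.atTop_mul_const hy0 tendsto_natCast_atTop_atTop
      have h3 : (fun k : ℕ => 1 + (k : ℝ) * y + z) = fun k : ℕ => (k : ℝ) * y + (1 + z) := by
        ext k; ring
      rw [h3]
      exact Filter.tendsto_atTop_add_const_right _ _ h2
    have := h1.inv_tendsto_atTop
    simpa [hu, one_div, Pi.inv_def] using this
  have htel : HasSum (fun k : ℕ => u k - u (k + 1)) (u 0) := by
    rw [hasSum_iff_tendsto_nat_of_nonneg hmono]
    have hps : ∀ N : ℕ, ∑ k ∈ Finset.range N, (u k - u (k + 1)) = u 0 - u N := by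
      intro N
      exact Finset.sum_range_sub' u N
    simp only [hps]
    have := Filter.Tendsto.const_sub (u 0) htend
    simpa using this
  rw [(htel.mul_left (1 / (P * y))).tsum_eq]
  have hu0 : u 0 = 1 / (1 + z) := by simp [hu]
  have hsplit : (∏ i ∈ Finset.Icc 1 (n - 1), x i) = P * y := by
    have h1 : n - 1 = (n - 2) + 1 := by omega
    rw [h1, Finset.prod_Icc_succ_top (by omega), hP, hy, h1]
  rw [hu0, hsplit]
  have h1z : (0:ℝ) < 1 + z := by linarith
  field_simp
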